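/- Let R be a commutative discrete valuation ring with uniformizer p, and let a < b be positive integers with a > 1 and a + b even, s = (a+b)/2. Then there exists a short exact sequence of R-modules 0 → R/P^s → R/P^{a-1} ⊕ R/P^{b+1} → R/P^s → 0; iterating it yields a periodic non-split coresolution, so R/P^s has infinite injective dimension in the exact structure E whose admissible sequences are those σ with Hom_R(σ, R/P^ℓ) exact for all ℓ ∉ (a−1, b+1). -/

import Mathlib

/-- Let `R` be a commutative DVR with uniformizer `p`, and `a < b` positive integers with
`a > 1` and `a + b` even, `s = (a+b)/2`.  Then there is a non-split short exact sequence of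
`R`-modules `0 → R/P^s → R/P^(a-1) ⊕ R/P^(b+1) → R/P^s → 0` (the building block of the
periodic coresolution showing that `R/P^s` has infinite injective dimension in the exact
structure determined by the gap `[a,b]`). -/
theorem exists_periodic_nonsplit_ses
    (R : Type) [CommRing R] [IsDomain R] [IsDiscreteValuationRing R]
    (p : R) (hp : IsLocalRing.maximalIdeal R = Ideal.span {p})
    (a b s : ℕ) (ha1 : 1 < a) (hab : a < b) (hs : 2 * s = a + b) :
    ∃ (f : (R ⧸ (IsLocalRing.maximalIdeal R ^ s)) →ₗ[R]
          ((R ⧸ (IsLocalRing.maximalIdeal R ^ (a - 1))) ×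
           (R ⧸ (IsLocalRing.maximalIdeal R ^ (b + 1)))))
      (g : ((R ⧸ (IsLocalRing.maximalIdeal R ^ (a - 1))) ×
           (R ⧸ (IsLocalRing.maximalIdeal R ^ (b + 1)))) →ₗ[R]
          (R ⧸ (IsLocalRing.maximalIdeal R ^ s))),
      Function.Injective f ∧ Function.Surjective g ∧ Function.Exact f g ∧
      ¬ ∃ r, r ∘ₗ f = (LinearMap.id : (R ⧸ (IsLocalRing.maximalIdeal R ^ s)) →ₗ[R] _) := by
  set P := IsLocalRing.maximalIdeal R with hPdef
  have hpirr : Irreducible p := by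
    rw [IsDiscreteValuationRing.irreducible_iff_uniformizer]; exact hp
  have hp0 : p ≠ 0 := hpirr.ne_zero
  set m := a - 1 with hm
  set t := s - m with ht
  have has : a < s := by omega
  have hsb : s < b := by omega
  have hms : m + t = s := by omega
  have hsn : s + t = b + 1 := by omega
  have ht1 : 1 ≤ t := by omega
  have hts : t ≤ s := by omega
  have hmem : ∀ (k : ℕ) (x : R), x ∈ P ^ k ↔ p ^ k ∣ x := by
    intro k x
    rw [hp, Ideal.span_singleton_pow, Ideal.mem_span_singleton]
  -- the maps
  have h1 : (P ^ s : Ideal R) ≤ LinearMap.ker (P ^ m : Ideal R).mkQ := by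
    rw [Submodule.ker_mkQ]
    exact Ideal.pow_le_pow_right (by omega)
  have h2 : (P ^ s : Ideal R) ≤ LinearMap.ker ((p ^ t) • (P ^ (b+1) : Ideal R).mkQ) := by
    intro x hx
    rw [LinearMap.mem_ker, LinearMap.smul_apply, Submodule.mkQ_apply,
      ← Submodule.Quotient.mk_smul, Submodule.Quotient.mk_eq_zero, smul_eq_mul]
    rw [hmem] at hx ⊢
    obtain ⟨c, rfl⟩ := hx
    exact ⟨c, by rw [← mul_assoc, ← pow_add, add_comm t s, hsn]⟩
  have h3 : (P ^ m : Ideal R) ≤ LinearMap.ker ((p ^ t) • (P ^ s : Ideal R).mkQ) := by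
    intro x hx
    rw [LinearMap.mem_ker, LinearMap.smul_apply, Submodule.mkQ_apply,
      ← Submodule.Quotient.mk_smul, Submodule.Quotient.mk_eq_zero, smul_eq_mul]
    rw [hmem] at hx ⊢
    obtain ⟨c, rfl⟩ := hx
    exact ⟨c, by rw [← mul_assoc, ← pow_add, add_comm t m, hms]⟩
  have h4 : (P ^ (b+1) : Ideal R) ≤ LinearMap.ker (-(P ^ s : Ideal R).mkQ) := by
    intro x hx
    rw [LinearMap.mem_ker, LinearMap.neg_apply, Submodule.mkQ_apply, neg_eq_zero,
      Submodule.Quotient.mk_eq_zero]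
    exact Ideal.pow_le_pow_right (by omega) hx
  refine ⟨LinearMap.prod (Submodule.liftQ _ (P ^ m : Ideal R).mkQ h1)
      (Submodule.liftQ _ ((p ^ t) • (P ^ (b+1) : Ideal R).mkQ) h2),
    LinearMap.coprod (Submodule.liftQ _ ((p ^ t) • (P ^ s : Ideal R).mkQ) h3)
      (Submodule.liftQ _ (-(P ^ s : Ideal R).mkQ) h4), ?_, ?_, ?_, ?_⟩
  · -- injective
    rw [← LinearMap.ker_eq_bot, Submodule.eq_bot_iff]
    intro q hq
    obtain ⟨x, rfl⟩ := Submodule.Quotient.mk_surjective _ q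
    rw [LinearMap.mem_ker, LinearMap.prod_apply, Function.prod, Prod.mk_eq_zero] at hq
    obtain ⟨-, hq2⟩ := hq
    rw [Submodule.liftQ_apply, LinearMap.smul_apply, Submodule.mkQ_apply,
      ← Submodule.Quotient.mk_smul, Submodule.Quotient.mk_eq_zero, smul_eq_mul,
      hmem] at hq2
    rw [Submodule.Quotient.mk_eq_zero, hmem]
    have : p ^ t * p ^ s ∣ p ^ t * x := by rwa [← pow_add, add_comm t s, hsn]
    exact (mul_dvd_mul_iff_left (pow_ne_zero t hp0)).mp this
  · -- surjective
    intro q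
    obtain ⟨x, rfl⟩ := Submodule.Quotient.mk_surjective _ q
    refine ⟨(0, -Submodule.Quotient.mk x), ?_⟩
    rw [LinearMap.coprod_apply, map_zero, zero_add, map_neg, Submodule.liftQ_apply,
      LinearMap.neg_apply, Submodule.mkQ_apply, neg_neg]
  · -- exact
    intro q
    obtain ⟨y, z⟩ := q
    obtain ⟨y, rfl⟩ := Submodule.Quotient.mk_surjective _ y
    obtain ⟨z, rfl⟩ := Submodule.Quotient.mk_surjective _ z
    rw [LinearMap.coprod_apply, Submodule.liftQ_apply, Submodule.liftQ_apply,
      LinearMap.smul_apply, LinearMap.neg_apply, Submodule.mkQ_apply, Submodule.mkQ_apply,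
      ← Submodule.Quotient.mk_smul, smul_eq_mul, ← Submodule.Quotient.mk_neg,
      ← Submodule.Quotient.mk_add, Submodule.Quotient.mk_eq_zero, hmem]
    constructor
    · rintro ⟨w, hw⟩
      refine ⟨Submodule.Quotient.mk (y - p ^ m * w), ?_⟩
      rw [LinearMap.prod_apply, Function.prod, Submodule.liftQ_apply, Submodule.liftQ_apply,
        LinearMap.smul_apply, Submodule.mkQ_apply, Submodule.mkQ_apply,
        ← Submodule.Quotient.mk_smul, smul_eq_mul]
      refine Prod.ext ?_ ?_
      · rw [Submodule.Quotient.eq, hmem]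
        exact ⟨-w, by ring⟩
      · rw [Submodule.Quotient.eq, hmem]
        refine ⟨0, ?_⟩
        have : p ^ t * (y - p ^ m * w) - z = (p ^ t * y + -z) - p ^ s * w := by
          rw [← hms, pow_add]; ring
        rw [this, hw, mul_zero]; ring
    · rintro ⟨x, hx⟩
      obtain ⟨x, rfl⟩ := Submodule.Quotient.mk_surjective _ x
      rw [LinearMap.prod_apply, Function.prod, Submodule.liftQ_apply, Submodule.liftQ_apply,
        LinearMap.smul_apply, Submodule.mkQ_apply, Submodule.mkQ_apply,
        ← Submodule.Quotient.mk_smul, smul_eq_mul, Prod.mk.injEq] at hx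
      obtain ⟨hx1, hx2⟩ := hx
      rw [Submodule.Quotient.eq, hmem] at hx1 hx2
      obtain ⟨u, hu⟩ := hx1
      obtain ⟨v, hv⟩ := hx2
      refine ⟨p ^ t * v - u, ?_⟩
      have epow1 : p ^ (b + 1) = p ^ s * p ^ t := by rw [← pow_add, hsn]
      have epow2 : p ^ s = p ^ t * p ^ m := by rw [← pow_add, add_comm t m, hms]
      linear_combination (-(p ^ t)) * hu + hv + v * epow1 + u * epow2
  · -- non-split
    rintro ⟨r, hr⟩
    set f1 := Submodule.liftQ (P ^ s : Ideal R) (P ^ m : Ideal R).mkQ h1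
    obtain ⟨c, hc⟩ := Submodule.Quotient.mk_surjective _
      (r ((Submodule.Quotient.mk 1 : R ⧸ (P ^ m : Ideal R)), 0))
    obtain ⟨d, hd⟩ := Submodule.Quotient.mk_surjective _
      (r (0, (Submodule.Quotient.mk 1 : R ⧸ (P ^ (b+1) : Ideal R))))
    have key : r (LinearMap.prod (Submodule.liftQ _ (P ^ m : Ideal R).mkQ h1)
        (Submodule.liftQ _ ((p ^ t) • (P ^ (b+1) : Ideal R).mkQ) h2)
        (Submodule.Quotient.mk 1)) = Submodule.Quotient.mk 1 := by
      rw [← LinearMap.comp_apply, hr, LinearMap.id_apply]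
    rw [LinearMap.prod_apply, Function.prod, Submodule.liftQ_apply, Submodule.liftQ_apply,
      LinearMap.smul_apply, Submodule.mkQ_apply, Submodule.mkQ_apply] at key
    have split : ((Submodule.Quotient.mk 1 : R ⧸ (P ^ m : Ideal R)),
        p ^ t • (Submodule.Quotient.mk 1 : R ⧸ (P ^ (b+1) : Ideal R)))
        = ((Submodule.Quotient.mk 1 : R ⧸ (P ^ m : Ideal R)), 0)
          + p ^ t • (0, (Submodule.Quotient.mk 1 : R ⧸ (P ^ (b+1) : Ideal R))) := by
      simp
    rw [split, map_add, map_smul, ← hc, ← hd] at key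
    -- p^m • (mk 1, 0) = 0 so p^m • mk c = 0
    have hann : (p ^ m) • ((Submodule.Quotient.mk 1 : R ⧸ (P ^ m : Ideal R)),
        (0 : R ⧸ (P ^ (b+1) : Ideal R))) = 0 := by
      rw [Prod.smul_mk, smul_zero, ← Submodule.Quotient.mk_smul, smul_eq_mul, mul_one,
        Prod.mk_eq_zero]
      exact ⟨by rw [Submodule.Quotient.mk_eq_zero]; exact (hmem m _).mpr dvd_rfl, rfl⟩
    have hcann : (p ^ m) • (Submodule.Quotient.mk c : R ⧸ (P ^ s : Ideal R)) = 0 := by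
      rw [hc, ← map_smul, hann, map_zero]
    rw [← Submodule.Quotient.mk_smul, Submodule.Quotient.mk_eq_zero, smul_eq_mul,
      hmem] at hcann
    have hptc : p ^ t ∣ c := by
      have : p ^ m * p ^ t ∣ p ^ m * c := by rwa [← pow_add, hms]
      exact (mul_dvd_mul_iff_left (pow_ne_zero m hp0)).mp this
    -- key : mk c + p^t • mk d = mk 1
    rw [← Submodule.Quotient.mk_smul, ← Submodule.Quotient.mk_add,
      Submodule.Quotient.eq, hmem, smul_eq_mul] at key
    obtain ⟨w, hw⟩ := key
    -- c + p^t d - 1 = p^s w ; p^t ∣ everything except 1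
    have : p ^ t ∣ 1 := by
      have h1' : (1 : R) = c + p ^ t * d - p ^ s * w := by rw [← hw]; ring
      obtain ⟨c', rfl⟩ := hptc
      rw [h1', ← hms, pow_add]
      exact ⟨c' + d - p ^ m * w, by ring⟩
    have : p ∣ 1 := dvd_trans (dvd_pow_self p (by omega)) this
    exact hpirr.not_isUnit (isUnit_of_dvd_one this)
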